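/- For all λ ∈ ℝ, if a run ρ satisfies FWMP(L, λ) for some L ≥ 1, then the liminf mean-payoff value of ρ is at least λ. -/

import Mathlib

def FWMP (w : ℕ → ℤ) (L : ℕ) (lam : ℝ) : Prop :=
  ∃ k : ℕ, ∀ i ≥ k, ∃ j : ℕ, 1 ≤ j ∧ j ≤ L ∧
    (∑ m ∈ Finset.Ico i (i + j), (w m : ℝ)) / (j : ℝ) ≥ lam

noncomputable def FWMPvalue (w : ℕ → ℤ) (L : ℕ) : ℝ := sSup {lam : ℝ | FWMP w L lam}

def BWMP (w : ℕ → ℤ) (lam : ℝ) : Prop := ∃ L : ℕ, 1 ≤ L ∧ FWMP w L lam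

noncomputable def BWMPvalue (w : ℕ → ℤ) : ℝ := sSup {lam : ℝ | BWMP w lam}

theorem stmt6 (w : ℕ → ℤ) (W : ℤ) (hW : ∀ k, |w k| ≤ W) (lam : ℝ)
    (L : ℕ) (hL : 1 ≤ L) (h : FWMP w L lam) :
    Filter.liminf (fun n : ℕ => (∑ k ∈ Finset.range n, (w k : ℝ)) / (n : ℝ))
      Filter.atTop ≥ lam := by
  classical
  obtain ⟨k, hk⟩ := h
  have hW0 : (0 : ℤ) ≤ W := le_trans (abs_nonneg _) (hW 0)
  -- choose windows
  have H : ∀ i : ℕ, ∃ j : ℕ, 1 ≤ j ∧ j ≤ L ∧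
      (k ≤ i → lam * j ≤ ∑ m ∈ Finset.Ico i (i + j), (w m : ℝ)) := by
    intro i
    by_cases hi : k ≤ i
    · obtain ⟨j, h1, h2, h3⟩ := hk i hi
      refine ⟨j, h1, h2, fun _ => ?_⟩
      have hj0 : (0 : ℝ) < j := by exact_mod_cast h1
      rw [ge_iff_le, le_div_iff₀ hj0] at h3
      exact h3
    · exact ⟨1, le_refl 1, hL, fun hc => absurd hc hi⟩
  choose j hj1 hj2 hj3 using H
  set a : ℕ → ℕ := fun t => Nat.rec k (fun _ x => x + j x) t with ha
  have ha0 : a 0 = k := rfl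
  have haS : ∀ t, a (t + 1) = a t + j (a t) := fun t => rfl
  have hka : ∀ t, k ≤ a t := by
    intro t
    induction t with
    | zero => exact le_refl k
    | succ t ih => exact le_trans ih (Nat.le_add_right _ _)
  have hmono : ∀ t, a t < a (t + 1) := by
    intro t
    rw [haS]
    exact Nat.lt_add_of_pos_right (hj1 (a t))
  have hta : ∀ t, t + k ≤ a t := by
    intro t
    induction t with
    | zero => simp [ha0]
    | succ t ih =>
      have := hmono t
      omega
  -- cumulative sum bound
  have hsum : ∀ t, lam * ((a t : ℝ) - k) ≤ ∑ m ∈ Finset.Ico k (a t), (w m : ℝ) := by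
    intro t
    induction t with
    | zero => simp [ha0]
    | succ t ih =>
      have hsplit : (∑ m ∈ Finset.Ico k (a t), (w m : ℝ)) +
          ∑ m ∈ Finset.Ico (a t) (a (t+1)), (w m : ℝ) =
          ∑ m ∈ Finset.Ico k (a (t+1)), (w m : ℝ) :=
        Finset.sum_Ico_consecutive _ (hka t) (le_of_lt (hmono t))
      have hwin := hj3 (a t) (hka t)
      rw [haS] at *
      have : lam * ((a t : ℝ) - k) + lam * (j (a t) : ℝ) ≤
          (∑ m ∈ Finset.Ico k (a t), (w m : ℝ)) +
          ∑ m ∈ Finset.Ico (a t) (a t + j (a t)), (w m : ℝ) :=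
        add_le_add ih hwin
      rw [hsplit] at this
      calc lam * ((↑(a t + j (a t)) : ℝ) - k)
          = lam * ((a t : ℝ) - k) + lam * (j (a t) : ℝ) := by push_cast; ring
        _ ≤ _ := this
  -- constant
  set C : ℝ := |∑ m ∈ Finset.range k, (w m : ℝ)| + |lam| * k + |lam| * L + W * L with hC
  have hC0 : 0 ≤ C := by
    have : (0:ℝ) ≤ (W:ℝ) * L := mul_nonneg (by exact_mod_cast hW0) (Nat.cast_nonneg L)
    positivity
  -- key estimate
  have hkey : ∀ n : ℕ, k ≤ n → lam * n - C ≤ ∑ m ∈ Finset.range n, (w m : ℝ) := by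
    intro n hn
    -- find t with a t ≤ n < a (t+1)
    have hex : ∃ t, n < a t := ⟨n + 1, by have := hta (n+1); omega⟩
    have ht0pos : Nat.find hex ≠ 0 := by
      intro h0
      have hsp := Nat.find_spec hex
      rw [h0, ha0] at hsp
      omega
    obtain ⟨t, ht⟩ := Nat.exists_eq_succ_of_ne_zero ht0pos
    have h1 : a t ≤ n := by
      have := Nat.find_min hex (m := t) (by omega)
      omega
    have h2 : n < a (t + 1) := by
      have := Nat.find_spec hex
      rwa [ht] at this
    have hnL : n - a t < L := by
      have := haS t
      have := hj2 (a t)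
      omega
    -- tail bound
    have htail : -((W : ℝ) * L) ≤ ∑ m ∈ Finset.Ico (a t) n, (w m : ℝ) := by
      have h1' : ∀ m ∈ Finset.Ico (a t) n, -(W : ℝ) ≤ (w m : ℝ) := by
        intro m _
        have := hW m
        have : -(W:ℝ) ≤ (w m : ℝ) := by
          rw [abs_le] at this
          exact_mod_cast this.1
        exact this
      have := Finset.sum_le_sum h1'
      have hcard : (Finset.Ico (a t) n).card = n - a t := Nat.card_Ico _ _
      have hcardL : ((Finset.Ico (a t) n).card : ℝ) ≤ L := by
        rw [hcard]; exact_mod_cast le_of_lt hnL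
      calc -((W:ℝ) * L) ≤ (Finset.Ico (a t) n).card • (-(W:ℝ)) := by
            rw [nsmul_eq_mul]
            have hWr : (0:ℝ) ≤ (W:ℝ) := by exact_mod_cast hW0
            nlinarith [hcardL, (Nat.cast_nonneg (Finset.Ico (a t) n).card : (0:ℝ) ≤ _)]
        _ ≤ _ := by simpa using this
    have hsplit : (∑ m ∈ Finset.range (a t), (w m : ℝ)) +
        ∑ m ∈ Finset.Ico (a t) n, (w m : ℝ) = ∑ m ∈ Finset.range n, (w m : ℝ) := by
      rw [Finset.range_eq_Ico, Finset.range_eq_Ico]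
      exact Finset.sum_Ico_consecutive _ (Nat.zero_le _) h1
    have hsplit2 : (∑ m ∈ Finset.range k, (w m : ℝ)) +
        ∑ m ∈ Finset.Ico k (a t), (w m : ℝ) = ∑ m ∈ Finset.range (a t), (w m : ℝ) := by
      rw [Finset.range_eq_Ico, Finset.range_eq_Ico]
      exact Finset.sum_Ico_consecutive _ (Nat.zero_le _) (hka t)
    have hS := hsum t
    -- combine
    have hna : ((n : ℝ) - (a t : ℝ)) ≤ L := by
      have : (n : ℝ) - (a t : ℝ) = ((n - a t : ℕ) : ℝ) := by
        push_cast [Nat.cast_sub h1]; ring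
      rw [this]
      exact_mod_cast le_of_lt hnL
    have hna0 : (0:ℝ) ≤ (n : ℝ) - (a t : ℝ) := by
      have : (a t : ℝ) ≤ n := by exact_mod_cast h1
      linarith
    have hlam1 : lam * ((a t : ℝ) - k) ≥ lam * n - |lam| * k - |lam| * L := by
      have e1 : lam * ((a t : ℝ) - k) = lam * n - lam * k - lam * ((n:ℝ) - a t) := by ring
      have e2 : lam * (k:ℝ) ≤ |lam| * k :=
        mul_le_mul_of_nonneg_right (le_abs_self lam) (Nat.cast_nonneg k)
      have e3 : lam * ((n:ℝ) - a t) ≤ |lam| * L := by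
        calc lam * ((n:ℝ) - a t) ≤ |lam| * ((n:ℝ) - a t) :=
              mul_le_mul_of_nonneg_right (le_abs_self lam) hna0
          _ ≤ |lam| * L := mul_le_mul_of_nonneg_left hna (abs_nonneg lam)
      linarith
    have hS0 : -|∑ m ∈ Finset.range k, (w m : ℝ)| ≤ ∑ m ∈ Finset.range k, (w m : ℝ) :=
      neg_abs_le _
    rw [← hsplit, ← hsplit2]
    rw [hC]
    linarith
  -- liminf conclusion
  have htend0 : Filter.Tendsto (fun n : ℕ => C / n) Filter.atTop (nhds 0) :=
    tendsto_const_div_atTop_nhds_zero_nat C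
  have htend : Filter.Tendsto (fun n : ℕ => lam - C / n) Filter.atTop (nhds lam) := by
    have := Filter.Tendsto.sub (tendsto_const_nhds (x := lam)) htend0
    simpa using this
  have hev : ∀ᶠ n : ℕ in Filter.atTop, lam - C / n ≤
      (∑ m ∈ Finset.range n, (w m : ℝ)) / n := by
    filter_upwards [Filter.eventually_ge_atTop (max k 1)] with n hn
    have hnk : k ≤ n := le_trans (le_max_left _ _) hn
    have hn1 : 1 ≤ n := le_trans (le_max_right _ _) hn
    have hn0 : (0:ℝ) < n := by exact_mod_cast hn1
    have := hkey n hnk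
    have h2 : (lam * n - C)/n ≤ (∑ m ∈ Finset.range n, (w m : ℝ)) / n :=
      (div_le_div_iff_of_pos_right hn0).mpr (hkey n hnk)
    have e : (lam * (n:ℝ) - C)/n = lam - C/n := by field_simp
    linarith
  have hbdd : Filter.IsBoundedUnder (· ≥ ·) Filter.atTop
      (fun n : ℕ => (∑ m ∈ Finset.range n, (w m : ℝ)) / n) := by
    refine ⟨lam - C, Filter.eventually_map.mpr ?_⟩
    filter_upwards [hev, Filter.eventually_ge_atTop 1] with n h1 h2
    have hn1 : (1:ℝ) ≤ n := by exact_mod_cast h2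
    have : C / n ≤ C := div_le_self hC0 hn1
    simp only [ge_iff_le]
    linarith
  have hub : Filter.IsBoundedUnder (· ≤ ·) Filter.atTop
      (fun n : ℕ => (∑ m ∈ Finset.range n, (w m : ℝ)) / n) := by
    refine ⟨(W : ℝ), Filter.eventually_map.mpr ?_⟩
    filter_upwards [Filter.eventually_ge_atTop 1] with n h2
    have hn0 : (0:ℝ) < n := by exact_mod_cast h2
    have hsum_le : ∑ m ∈ Finset.range n, (w m : ℝ) ≤ (n : ℝ) * W := by
      calc ∑ m ∈ Finset.range n, (w m : ℝ) ≤ ∑ m ∈ Finset.range n, (W : ℝ) := by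
            refine Finset.sum_le_sum fun m _ => ?_
            have := hW m
            rw [abs_le] at this
            exact_mod_cast this.2
        _ = (n : ℝ) * W := by simp [mul_comm]
    rw [div_le_iff₀ hn0]
    linarith
  have hcob : Filter.IsCoboundedUnder (· ≥ ·) Filter.atTop
      (fun n : ℕ => (∑ m ∈ Finset.range n, (w m : ℝ)) / n) :=
    hub.isCoboundedUnder_ge
  have hlb : Filter.IsBoundedUnder (· ≥ ·) Filter.atTop
      (fun n : ℕ => lam - C / n) := by
    refine ⟨lam - C, Filter.eventually_map.mpr ?_⟩
    filter_upwards [Filter.eventually_ge_atTop 1] with n h2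
    have hn1 : (1:ℝ) ≤ n := by exact_mod_cast h2
    have : C / n ≤ C := div_le_self hC0 hn1
    simp only [ge_iff_le]
    linarith
  calc lam = Filter.liminf (fun n : ℕ => lam - C / n) Filter.atTop := htend.liminf_eq.symm
    _ ≤ _ := Filter.liminf_le_liminf hev hlb hcob
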